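/- Let W be the real symmetric (m+n)×(m+n) block matrix W = [[A, B], [Bᵀ, O]], where A ∈ ℝ^{m×m} is symmetric positive definite, B ∈ ℝ^{m×n}, and O is the n×n zero matrix. Then W possesses the quasi-Perron-Frobenius property: ρ(W) = λ_max(W) and λ_max(W) ≠ −λ_min(W). -/

import Mathlib

open Matrix

/-- A real matrix is negative semidefinite if it is symmetric (Hermitian) and its
quadratic form is nonpositive. -/
def Matrix.NegSemidefinite {k : Type*} [Fintype k] (M : Matrix k k ℝ) : Prop :=
  M.IsHermitian ∧ ∀ x : k → ℝ, x ⬝ᵥ (M *ᵥ x) ≤ 0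

/-- The maximum eigenvalue of a real symmetric matrix. -/
noncomputable def maxEig {k : Type*} [Fintype k] [DecidableEq k]
    {M : Matrix k k ℝ} (hM : M.IsHermitian) : ℝ :=
  ⨆ i, hM.eigenvalues i

/-- The minimum eigenvalue of a real symmetric matrix. -/
noncomputable def minEig {k : Type*} [Fintype k] [DecidableEq k]
    {M : Matrix k k ℝ} (hM : M.IsHermitian) : ℝ :=
  ⨅ i, hM.eigenvalues i

/-- The spectral radius of a real symmetric matrix: the maximum of the absolute
values of its eigenvalues. -/
noncomputable def specRad {k : Type*} [Fintype k] [DecidableEq k]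
    {M : Matrix k k ℝ} (hM : M.IsHermitian) : ℝ :=
  ⨆ i, |hM.eigenvalues i|

/-- Rayleigh-type upper bound for the quadratic form of a real symmetric matrix. -/
lemma rayleigh_le' {k : Type*} [Fintype k] [DecidableEq k] [Nonempty k]
    {M : Matrix k k ℝ} (hM : M.IsHermitian) (x : k → ℝ) :
    x ⬝ᵥ (M *ᵥ x) ≤ maxEig hM * (x ⬝ᵥ x) := by
  set U := (hM.eigenvectorUnitary : Matrix k k ℝ)
  set c := star U *ᵥ x with hc
  have hq : x ⬝ᵥ (M *ᵥ x) = c ⬝ᵥ (diagonal hM.eigenvalues *ᵥ c) := by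
    conv_lhs => rw [hM.spectral_theorem, Unitary.conjStarAlgAut_apply]
    rw [← mulVec_mulVec, ← mulVec_mulVec, dotProduct_mulVec, ← mulVec_transpose]
    congr 1
  have hn : x ⬝ᵥ x = c ⬝ᵥ c := by
    have h1 : U * star U = 1 := (Matrix.mem_unitaryGroup_iff).mp hM.eigenvectorUnitary.2
    nth_rewrite 2 [show x = (U * star U) *ᵥ x by rw [h1, one_mulVec]]
    rw [← mulVec_mulVec, dotProduct_mulVec, ← mulVec_transpose]
    congr 1
  rw [hq, hn]
  simp only [dotProduct, mulVec_diagonal, Finset.mul_sum]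
  apply Finset.sum_le_sum
  intro i _
  have h1 : hM.eigenvalues i ≤ maxEig hM :=
    le_ciSup (Set.Finite.bddAbove (Set.finite_range _)) i
  calc c i * (hM.eigenvalues i * c i) = hM.eigenvalues i * (c i * c i) := by ring
    _ ≤ maxEig hM * (c i * c i) := mul_le_mul_of_nonneg_right h1 (mul_self_nonneg _)

theorem stmt_8 (m n : ℕ) (hm : 0 < m) (hn : 0 < n)
    (A : Matrix (Fin m) (Fin m) ℝ) (B : Matrix (Fin m) (Fin n) ℝ)
    (hA : A.PosDef)
    (hW : (fromBlocks A B Bᵀ (0 : Matrix (Fin n) (Fin n) ℝ)).IsHermitian) :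
    specRad hW = maxEig hW ∧ maxEig hW ≠ -minEig hW := by
  have : Nonempty (Fin m) := ⟨⟨0, hm⟩⟩
  have hne : Nonempty (Fin m ⊕ Fin n) := ⟨Sum.inl ⟨0, hm⟩⟩
  -- quadratic form formula
  have qf : ∀ (x : Fin m → ℝ) (y : Fin n → ℝ),
      Sum.elim x y ⬝ᵥ (fromBlocks A B Bᵀ (0 : Matrix (Fin n) (Fin n) ℝ) *ᵥ Sum.elim x y)
        = x ⬝ᵥ (A *ᵥ x) + 2 * (x ⬝ᵥ (B *ᵥ y)) := by
    intro x y
    have hsym : y ⬝ᵥ (Bᵀ *ᵥ x) = x ⬝ᵥ (B *ᵥ y) := by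
      rw [dotProduct_mulVec, vecMul_transpose, dotProduct_comm]
    rw [fromBlocks_mulVec, sumElim_dotProduct_sumElim]
    simp only [Sum.elim_comp_inl, Sum.elim_comp_inr, zero_mulVec, add_zero, dotProduct_add, hsym]
    ring
  -- positivity of the A-quadratic form
  have hposA : ∀ x : Fin m → ℝ, x ≠ 0 → 0 < x ⬝ᵥ (A *ᵥ x) := by
    intro x hx
    have := hA.dotProduct_mulVec_pos hx
    simpa using this
  -- 0 < maxEig
  have hmaxpos : 0 < maxEig hW := by
    set e : Fin m → ℝ := Pi.single ⟨0, hm⟩ 1 with he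
    have heq : Sum.elim e (0 : Fin n → ℝ) ⬝ᵥ
        (fromBlocks A B Bᵀ (0 : Matrix (Fin n) (Fin n) ℝ) *ᵥ Sum.elim e 0)
          = e ⬝ᵥ (A *ᵥ e) := by
      rw [qf]; simp
    have hu : Sum.elim e (0 : Fin n → ℝ) ⬝ᵥ Sum.elim e 0 = 1 := by
      rw [sumElim_dotProduct_sumElim]
      simp [he, dotProduct, Pi.single_apply]
    have hball := rayleigh_le' hW (Sum.elim e 0)
    rw [heq, hu, mul_one] at hball
    have hpe : 0 < e ⬝ᵥ (A *ᵥ e) := by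
      apply hposA
      intro h
      have := congrFun h ⟨0, hm⟩
      simp [he] at this
    linarith
  -- key claim: for every eigenvalue λ, -λ < maxEig
  have key : ∀ i, -(hW.eigenvalues i) < maxEig hW := by
    intro i
    set v : (Fin m ⊕ Fin n) → ℝ := ⇑(hW.eigenvectorBasis i) with hv
    set x : Fin m → ℝ := fun j => v (Sum.inl j) with hx
    set y : Fin n → ℝ := fun j => v (Sum.inr j) with hy
    have hvxy : v = Sum.elim x y := by funext j; cases j <;> rfl
    have hunit : v ⬝ᵥ v = 1 := by
      have h1 : ‖hW.eigenvectorBasis i‖ = 1 := hW.eigenvectorBasis.orthonormal.1 i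
      have h2 : (inner ℝ (hW.eigenvectorBasis i) (hW.eigenvectorBasis i) : ℝ) = 1 := by
        rw [real_inner_self_eq_norm_sq, h1]; norm_num
      rw [← h2]
      simp only [PiLp.inner_apply, dotProduct, RCLike.inner_apply, conj_trivial, mul_comm, hv]
    have heig : hW.eigenvalues i
        = v ⬝ᵥ (fromBlocks A B Bᵀ (0 : Matrix (Fin n) (Fin n) ℝ) *ᵥ v) := by
      have := hW.eigenvalues_eq i
      simpa using this
    have hqv : hW.eigenvalues i = x ⬝ᵥ (A *ᵥ x) + 2 * (x ⬝ᵥ (B *ᵥ y)) := by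
      rw [heig, hvxy, qf]
    have hqw : Sum.elim (-x) y ⬝ᵥ
        (fromBlocks A B Bᵀ (0 : Matrix (Fin n) (Fin n) ℝ) *ᵥ Sum.elim (-x) y)
          = x ⬝ᵥ (A *ᵥ x) - 2 * (x ⬝ᵥ (B *ᵥ y)) := by
      rw [qf]
      simp only [mulVec_neg, neg_dotProduct, dotProduct_neg, neg_neg]
      ring
    have hwunit : Sum.elim (-x) y ⬝ᵥ Sum.elim (-x) y = 1 := by
      rw [sumElim_dotProduct_sumElim, neg_dotProduct, dotProduct_neg, neg_neg]
      rw [hvxy, sumElim_dotProduct_sumElim] at hunit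
      exact hunit
    have hball := rayleigh_le' hW (Sum.elim (-x) y)
    rw [hqw, hwunit, mul_one] at hball
    by_cases hx0 : x = 0
    · rw [hqv, hx0]
      simpa using hmaxpos
    · have hpx := hposA x hx0
      rw [hqv]
      linarith
  have hbdd : BddAbove (Set.range fun i => hW.eigenvalues i) :=
    Set.Finite.bddAbove (Set.finite_range _)
  have hbddabs : BddAbove (Set.range fun i => |hW.eigenvalues i|) :=
    Set.Finite.bddAbove (Set.finite_range _)
  constructor
  · apply le_antisymm
    · apply ciSup_le
      intro i
      exact abs_le.mpr ⟨by linarith [key i], le_ciSup hbdd i⟩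
    · apply ciSup_le
      intro i
      exact (le_abs_self _).trans (le_ciSup hbddabs i)
  · obtain ⟨i, hi⟩ := Finite.exists_min (fun i => hW.eigenvalues i)
    have hmin : minEig hW = hW.eigenvalues i :=
      le_antisymm (ciInf_le (Set.Finite.bddBelow (Set.finite_range _)) i) (le_ciInf hi)
    intro h
    rw [hmin] at h
    have := key i
    rw [← h] at this
    exact lt_irrefl _ this
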